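/- arXiv:1805.00723 — 10 statements merged into one kernel-verified Lean document; each statement's English description precedes it below -/
import Mathlib

section
/- Let A be a unital algebra and P a Rota–Baxter operator of weight 0 on A. If P(1) is a scalar multiple of 1, then P(1) = 0, P² = 0, and the image of P is contained in the kernel of P. -/
/-- A Rota–Baxter operator of weight `lam` on a (not necessarily associative)
algebra `A` over a field `F`. -/
def IsRotaBaxter (F : Type*) {A : Type*} [Field F] [NonUnitalNonAssocRing A]
    [Module F A] (lam : F) (R : A →ₗ[F] A) : Prop :=
  ∀ x y : A, R x * R y = R (R x * y + x * R y + lam • (x * y))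

/-- If `P` is a weight-zero RB-operator on a unital algebra with `P(1)` scalar,
then `P(1) = 0`, `P² = 0` and `Im P ⊆ ker P`. -/
theorem rb_weight_zero_scalar_P1 {F A : Type*} [Field F] [CharZero F]
    [NonAssocRing A] [Module F A] [SMulCommClass F A A] [IsScalarTower F A A]
    (P : A →ₗ[F] A) (hP : IsRotaBaxter F (0 : F) P)
    (hscalar : ∃ c : F, P 1 = c • (1 : A)) :
    P 1 = 0 ∧ P ∘ₗ P = 0 ∧ LinearMap.range P ≤ LinearMap.ker P := by
  obtain ⟨c, hc⟩ := hscalar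
  have h11 := hP 1 1
  rw [hc] at h11
  have key : (c * c) • (1 : A) = 0 := by
    have lhs : (c • (1 : A)) * (c • (1 : A)) = (c * c) • (1 : A) := by
      rw [smul_mul_smul_comm, one_mul]
    have rhs : P ((c • (1 : A)) * 1 + 1 * (c • (1 : A)) + (0 : F) • (1 * 1))
        = (c * c) • (1 : A) + (c * c) • (1 : A) := by
      simp [hc, smul_smul]
    rw [lhs, rhs] at h11
    exact (left_eq_add.mp h11)
  have hP1 : P 1 = 0 := by
    rcases eq_or_ne c 0 with h | h
    · rw [hc, h, zero_smul]
    · have h1 : (1 : A) = 0 := by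
        have := congrArg (fun z => (c * c)⁻¹ • z) key
        simpa [smul_smul, inv_mul_cancel₀ (mul_ne_zero h h), h] using this
      rw [hc, h1, smul_zero]

  have hPP : ∀ x : A, P (P x) = 0 := by
    intro x
    simpa [hP1] using (hP x 1).symm
  refine ⟨hP1, ?_, ?_⟩
  · ext x; simp [hPP x]
  · rintro y ⟨x, rfl⟩
    exact hPP x
end

section
/- Let A be a unital algebra over a field of characteristic zero and P a Rota–Baxter operator of weight 0 on A. Then 1 does not lie in the image of P. -/
/-- For a weight-zero RB-operator `P` on a unital algebra over a field of
characteristic zero, the unit `1` is not in the image of `P`. -/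
theorem rb_weight_zero_one_not_in_image {F A : Type*} [Field F] [CharZero F]
    [NonAssocRing A] [Nontrivial A] [Module F A] [SMulCommClass F A A] [IsScalarTower F A A]
    (P : A →ₗ[F] A) (hP : IsRotaBaxter F (0 : F) P) :
    (1 : A) ∉ LinearMap.range P := by
  rintro ⟨e, he⟩
  have h := hP e e
  simp only [he, zero_smul, add_zero, one_mul, mul_one, map_add] at h
  exact one_ne_zero (left_eq_add.mp h)
end

section
/- Let a (possibly nonassociative) algebra A be a direct sum of two ideals A₁ and A₂, and let R be a Rota–Baxter operator of weight λ on A. Then the composition Pr₁ ∘ R, where Pr₁ is the projection of A onto A₁ along A₂, restricted to A₁, is a Rota–Baxter operator of weight λ on A₁. -/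
/-- If `A = A₁ ⊕ A₂` is a direct sum of two ideals and `R` is an RB-operator of
weight `lam` on `A`, then `Pr₁ ∘ R` restricted to `A₁` is an RB-operator of
weight `lam` on `A₁`. Here the projection `Pr₁` onto `A₁` along `A₂` is encoded
as a linear map `pr` with range in `A₁` that is the identity on `A₁` and kills `A₂`. -/
theorem rb_projection_onto_ideal {F A : Type*} [Field F] [NonUnitalNonAssocRing A]
    [Module F A] [SMulCommClass F A A] [IsScalarTower F A A]
    (lam : F) (A₁ A₂ : Submodule F A)
    (hI₁ : ∀ a x : A, x ∈ A₁ → a * x ∈ A₁ ∧ x * a ∈ A₁)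
    (hI₂ : ∀ a x : A, x ∈ A₂ → a * x ∈ A₂ ∧ x * a ∈ A₂)
    (hcompl : IsCompl A₁ A₂)
    (R : A →ₗ[F] A) (hR : IsRotaBaxter F lam R)
    (pr : A →ₗ[F] A)
    (hpr : ∀ x ∈ A₁, ∀ y ∈ A₂, pr (x + y) = x) :
    ∀ x ∈ A₁, ∀ y ∈ A₁,
      pr (R x) * pr (R y)
        = pr (R (pr (R x) * y + x * pr (R y) + lam • (x * y))) := by
  -- products of an element of A₁ with an element of A₂ vanish
  have hmul₁ : ∀ u ∈ A₁, ∀ v ∈ A₂, u * v = 0 := by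
    intro u hu v hv
    have h1 : u * v ∈ A₁ := (hI₁ v u hu).2
    have h2 : u * v ∈ A₂ := (hI₂ u v hv).1
    exact (Submodule.mem_bot F).1 (hcompl.inf_eq_bot ▸ Submodule.mem_inf.2 ⟨h1, h2⟩)
  have hmul₂ : ∀ v ∈ A₂, ∀ u ∈ A₁, v * u = 0 := by
    intro v hv u hu
    have h1 : v * u ∈ A₁ := (hI₁ v u hu).1
    have h2 : v * u ∈ A₂ := (hI₂ u v hv).2
    exact (Submodule.mem_bot F).1 (hcompl.inf_eq_bot ▸ Submodule.mem_inf.2 ⟨h1, h2⟩)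
  -- decomposition of arbitrary elements
  have decomp : ∀ a : A, ∃ p ∈ A₁, ∃ s ∈ A₂, a = p + s ∧ pr a = p := by
    intro a
    obtain ⟨p, s, hp, hs, hps⟩ := Submodule.codisjoint_iff_exists_add_eq.mp hcompl.codisjoint a
    exact ⟨p, hp, s, hs, hps.symm, by rw [← hps]; exact hpr p hp s hs⟩
  intro x hx y hy
  obtain ⟨p, hp, s, hs, hRx, hprx⟩ := decomp (R x)
  obtain ⟨q, hq, t, ht, hRy, hpry⟩ := decomp (R y)
  rw [hprx, hpry]
  have key : R x * y + x * R y + lam • (x * y) = p * y + x * q + lam • (x * y) := by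
    rw [hRx, hRy, add_mul, mul_add, hmul₂ s hs y hy, hmul₁ x hx t ht, add_zero, add_zero]
  rw [← key, ← hR x y, hRx, hRy]
  have expand : (p + s) * (q + t) = p * q + s * t := by
    rw [add_mul, mul_add, mul_add, hmul₁ p hp t ht, hmul₂ s hs q hq, add_zero, zero_add]
  rw [expand]
  exact (hpr (p * q) ((hI₁ p q hq).1) (s * t) ((hI₂ s t ht).1)).symm
end

section
/- Let A be an associative unital Rota–Baxter algebra of weight λ with RB-operator R over a field of characteristic zero. Then for all n ≥ 1: n!·Rⁿ(1) = Σ_{k=1}^{n} (-1)^{n-k} λ^{n-k} s(n,k) (R(1))^k, where s(n,k) are Stirling numbers of the first kind. -/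
/-- Unsigned Stirling numbers of the first kind. -/
def stirlingFirst : ℕ → ℕ → ℕ
  | 0, 0 => 1
  | 0, _ + 1 => 0
  | _ + 1, 0 => 0
  | n + 1, k + 1 => stirlingFirst n k + n * stirlingFirst n (k + 1)

lemma stirlingFirst_eq_zero : ∀ {n k : ℕ}, n < k → stirlingFirst n k = 0
  | 0, _ + 1, _ => rfl
  | n + 1, k + 1, h => by
      have h1 : n < k := by omega
      have h2 : n < k + 1 := by omega
      show stirlingFirst n k + n * stirlingFirst n (k + 1) = 0
      rw [stirlingFirst_eq_zero h1, stirlingFirst_eq_zero h2]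
      simp

lemma stirlingFirst_zero_right (n : ℕ) (hn : 1 ≤ n) : stirlingFirst n 0 = 0 := by
  cases n with
  | zero => omega
  | succ m => rfl

lemma rb_key {F A : Type*} [Field F] [Ring A] [Algebra F A]
    (lam : F) (R : A →ₗ[F] A) (hR : IsRotaBaxter F lam R) :
    ∀ n : ℕ, R 1 * (R ^ n) 1
      = ((n + 1 : ℕ) : F) • (R ^ (n + 1)) 1 + (((n : ℕ) : F) * lam) • (R ^ n) 1 := by
  intro n
  induction n with
  | zero => simp [pow_succ, Module.End.mul_apply]
  | succ n ih =>
    have hsucc : ∀ m : ℕ, (R ^ (m + 1)) (1 : A) = R ((R ^ m) 1) := by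
      intro m; rw [pow_succ', Module.End.mul_apply]
    rw [hsucc n, hR 1 ((R ^ n) 1)]
    rw [one_mul, one_mul, map_add, map_add, map_smul, ih, map_add, map_smul, map_smul]
    rw [← hsucc n, ← hsucc (n + 1)]
    push_cast
    module

lemma rb_sum_step {F A : Type*} [Field F] [Ring A] [Algebra F A]
    (lam : F) (r : A) {n : ℕ} (hn : 1 ≤ n) :
    r * (∑ k ∈ Finset.Icc 1 n,
          ((-1 : F) ^ (n - k) * lam ^ (n - k) * (stirlingFirst n k : F)) • r ^ k)
      - (((n : ℕ) : F) * lam) • (∑ k ∈ Finset.Icc 1 n,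
          ((-1 : F) ^ (n - k) * lam ^ (n - k) * (stirlingFirst n k : F)) • r ^ k)
      = ∑ k ∈ Finset.Icc 1 (n + 1),
          ((-1 : F) ^ (n + 1 - k) * lam ^ (n + 1 - k) * (stirlingFirst (n + 1) k : F)) • r ^ k := by
  have hIcc : ∀ (m : ℕ) (f : ℕ → A), ∑ k ∈ Finset.Icc 1 m, f k
      = ∑ i ∈ Finset.range m, f (1 + i) := by
    intro m f
    rw [← Finset.Ico_add_one_right_eq_Icc, Finset.sum_Ico_eq_sum_range]
    simp
  rw [hIcc n, hIcc (n + 1), Finset.mul_sum, Finset.smul_sum]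
  -- RHS expansion
  have hrhs : ∀ i : ℕ,
      ((-1 : F) ^ (n + 1 - (1 + i)) * lam ^ (n + 1 - (1 + i)) * (stirlingFirst (n + 1) (1 + i) : F))
        • r ^ (1 + i)
      = ((-1 : F) ^ (n - i) * lam ^ (n - i) * (stirlingFirst n i : F)) • r ^ (1 + i)
        + ((n : F) * ((-1 : F) ^ (n - i) * lam ^ (n - i) * (stirlingFirst n (i + 1) : F)))
          • r ^ (1 + i) := by
    intro i
    have h1 : n + 1 - (1 + i) = n - i := by omega
    have h2 : (1 + i) = i + 1 := by omega
    rw [h1, h2]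
    show ((-1 : F) ^ (n - i) * lam ^ (n - i)
        * ((stirlingFirst n i + n * stirlingFirst n (i + 1) : ℕ) : F)) • r ^ (i + 1) = _
    push_cast
    rw [← add_smul]
    ring_nf
  rw [Finset.sum_congr rfl fun i _ => hrhs i, Finset.sum_add_distrib]
  -- first RHS sum: peel i = 0
  rw [Finset.sum_range_succ' (fun i =>
      ((-1 : F) ^ (n - i) * lam ^ (n - i) * (stirlingFirst n i : F)) • r ^ (1 + i))]
  rw [stirlingFirst_zero_right n hn]
  -- second RHS sum: peel i = n
  rw [Finset.sum_range_succ (fun i =>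
      ((n : F) * ((-1 : F) ^ (n - i) * lam ^ (n - i) * (stirlingFirst n (i + 1) : F))) • r ^ (1 + i))]
  rw [stirlingFirst_eq_zero (Nat.lt_succ_self n)]
  simp only [Nat.cast_zero, mul_zero, zero_smul, add_zero, zero_mul, smul_zero]
  -- now match term by term
  have e1 : ∀ i ∈ Finset.range n,
      r * (((-1 : F) ^ (n - (1 + i)) * lam ^ (n - (1 + i)) * (stirlingFirst n (1 + i) : F)) • r ^ (1 + i))
      = ((-1 : F) ^ (n - (i + 1)) * lam ^ (n - (i + 1)) * (stirlingFirst n (i + 1) : F)) • r ^ (1 + (i + 1)) := by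
    intro i _
    rw [mul_smul_comm, ← pow_succ']
    have h2 : (1 + i) = i + 1 := by omega
    have h3 : 1 + i + 1 = 1 + (i + 1) := by omega
    rw [h2]
    rw [show 1 + (i + 1) = i + 1 + 1 by omega]
  have e2 : ∀ i ∈ Finset.range n,
      (((n : ℕ) : F) * lam) • (((-1 : F) ^ (n - (1 + i)) * lam ^ (n - (1 + i))
          * (stirlingFirst n (1 + i) : F)) • r ^ (1 + i))
      = -(((n : F) * ((-1 : F) ^ (n - i) * lam ^ (n - i) * (stirlingFirst n (i + 1) : F))) • r ^ (1 + i)) := by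
    intro i hi
    rw [Finset.mem_range] at hi
    have h1 : n - i = (n - (1 + i)) + 1 := by omega
    have h2 : (1 + i) = i + 1 := by omega
    rw [h1, h2, smul_smul, ← neg_smul]
    congr 1
    ring
  rw [Finset.sum_congr rfl e1, Finset.sum_congr rfl e2]
  simp [Finset.sum_neg_distrib, sub_neg_eq_add]

/-- `n! Rⁿ(1) = Σ_{k=1}^n (-1)^(n-k) λ^(n-k) s(n,k) (R 1)^k`. -/
theorem rb_stirling_first {F A : Type*} [Field F] [CharZero F] [Ring A] [Algebra F A]
    (lam : F) (R : A →ₗ[F] A) (hR : IsRotaBaxter F lam R) (n : ℕ) (hn : 1 ≤ n) :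
    ((Nat.factorial n : ℕ) : F) • ((R ^ n) (1 : A))
      = ∑ k ∈ Finset.Icc 1 n,
          ((-1 : F) ^ (n - k) * lam ^ (n - k) * (stirlingFirst n k : F)) • (R 1) ^ k := by
  induction n, hn using Nat.le_induction with
  | base =>
    simp [Nat.factorial, show stirlingFirst 1 1 = 1 from rfl]
  | succ n hn ih =>
    have hfac : ((Nat.factorial (n + 1) : ℕ) : F) = ((n + 1 : ℕ) : F) * (Nat.factorial n : ℕ) := by
      rw [Nat.factorial_succ]; push_cast; ring
    have h1 : ((n + 1 : ℕ) : F) • (R ^ (n + 1)) (1 : A)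
        = R 1 * (R ^ n) 1 - (((n : ℕ) : F) * lam) • (R ^ n) 1 := by
      rw [rb_key lam R hR n]; module
    calc ((Nat.factorial (n + 1) : ℕ) : F) • (R ^ (n + 1)) (1 : A)
        = ((Nat.factorial n : ℕ) : F) • (((n + 1 : ℕ) : F) • (R ^ (n + 1)) (1 : A)) := by
          rw [hfac, mul_comm, mul_smul]
      _ = ((Nat.factorial n : ℕ) : F)
            • (R 1 * (R ^ n) 1 - (((n : ℕ) : F) * lam) • (R ^ n) 1) := by rw [h1]
      _ = R 1 * (((Nat.factorial n : ℕ) : F) • (R ^ n) 1)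
            - (((n : ℕ) : F) * lam) • (((Nat.factorial n : ℕ) : F) • (R ^ n) 1) := by
          rw [smul_sub, mul_smul_comm, smul_comm (((Nat.factorial n : ℕ) : F))]
      _ = _ := by rw [ih]; exact rb_sum_step lam (R 1) hn
end

section
/- Let A be a unital associative algebra over a field of characteristic zero with a Rota–Baxter operator R of weight 0. Then (R(1))ⁿ = n!·Rⁿ(1) for all n ∈ ℕ. -/
theorem rb_aux {F A : Type*} [Field F] [CharZero F]
    [Ring A] [Algebra F A]
    (R : A →ₗ[F] A) (hR : IsRotaBaxter F (0 : F) R) (k : ℕ) :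
    R 1 * (R ^ k) 1 = ((k + 1 : ℕ) : F) • ((R ^ (k + 1)) (1 : A)) := by
  induction k with
  | zero => simp
  | succ k ih =>
    have h1 : (R ^ (k + 1)) (1 : A) = R ((R ^ k) 1) := by
      rw [pow_succ']; rfl
    have h2 : (R ^ (k + 2)) (1 : A) = R ((R ^ (k + 1)) 1) := by
      rw [pow_succ']; rfl
    have key := hR 1 ((R ^ k) 1)
    rw [h1, key]
    simp only [zero_smul, add_zero, one_mul, map_add, ih, map_smul, h2]
    rw [← h1]
    push_cast
    module

/-- For a weight-zero RB-operator `R` on a unital associative algebra over a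
field of characteristic zero, `(R 1)ⁿ = n! Rⁿ(1)` for all `n`. -/
theorem rb_weight_zero_powers_of_R1 {F A : Type*} [Field F] [CharZero F]
    [Ring A] [Algebra F A]
    (R : A →ₗ[F] A) (hR : IsRotaBaxter F (0 : F) R) (n : ℕ) :
    (R 1) ^ n = ((Nat.factorial n : ℕ) : F) • ((R ^ n) (1 : A)) := by
  induction n with
  | zero => simp
  | succ n ih =>
    rw [pow_succ', ih, mul_smul_comm, rb_aux R hR n, smul_smul,
      Nat.factorial_succ]
    push_cast
    ring_nf
end

section
/- Let A be a unital associative algebra over a field of characteristic zero and R a Rota–Baxter operator of weight -1 on A, with a = R(1). Then R(aⁿ) = Fₙ(a) for all n ∈ ℕ, where Fₙ is the Faulhaber polynomial satisfying Fₙ(m) = Σ_{j=1}^{m} jⁿ for positive integers m. -/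
section Aux1
open Finset Polynomial

/-- Rational coefficient of the Faulhaber polynomial. -/
noncomputable def fcoef (n j : ℕ) : ℚ :=
  ((n : ℚ) + 1)⁻¹ * ((-1) ^ j * ((n + 1).choose j : ℚ) * _root_.bernoulli j)

/-- The Faulhaber polynomial over ℚ. -/
noncomputable def FP (n : ℕ) : ℚ[X] :=
  ∑ j ∈ range (n + 1), C (fcoef n j) * X ^ (n + 1 - j)

lemma FP_eval (n m : ℕ) :
    (FP n).eval (m : ℚ) = ∑ k ∈ Ico 1 (m + 1), (k : ℚ) ^ n := by
  rw [_root_.sum_Ico_pow]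
  simp only [FP, eval_finset_sum, eval_mul, eval_C, eval_pow, eval_X, fcoef]
  refine Finset.sum_congr rfl fun j hj => ?_
  rw [bernoulli'_eq_bernoulli]
  push_cast
  ring

/-- Sum of n-th powers. -/
noncomputable def G (n m : ℕ) : ℚ := ∑ k ∈ range m, ((k : ℚ) + 1) ^ n

lemma FP_eval' (n m : ℕ) : (FP n).eval (m : ℚ) = G n m := by
  rw [FP_eval, G, Finset.sum_Ico_eq_sum_range]
  simp [add_comm 1]

lemma key_nat (n m : ℕ) :
    ((m : ℚ) + 1) * G n m = G (n + 1) m + ∑ k ∈ range m, G n (k + 1) := by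
  induction m with
  | zero => simp [G]
  | succ m ih =>
    have h1 : G n (m + 1) = G n m + ((m : ℚ) + 1) ^ n := by
      simp [G, Finset.sum_range_succ]
    have h2 : G (n + 1) (m + 1) = G (n + 1) m + ((m : ℚ) + 1) ^ (n + 1) := by
      simp [G, Finset.sum_range_succ]
    rw [Finset.sum_range_succ, h1, h2]
    push_cast
    linear_combination ih

lemma FP_key (n : ℕ) :
    (X + 1) * FP n = FP (n + 1) + ∑ j ∈ range (n + 1), C (fcoef n j) * FP (n + 1 - j) := by
  apply Polynomial.eq_of_infinite_eval_eq
  apply Set.Infinite.mono (s := Set.range (Nat.cast : ℕ → ℚ))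
  · rintro _ ⟨m, rfl⟩
    show _ = _
    rw [eval_mul, eval_add, eval_add, eval_X, eval_one, eval_finset_sum, FP_eval', FP_eval',
      key_nat]
    congr 1
    have : ∀ j ∈ range (n + 1),
        eval (m : ℚ) (C (fcoef n j) * FP (n + 1 - j)) =
          ∑ k ∈ range m, fcoef n j * ((k : ℚ) + 1) ^ (n + 1 - j) := by
      intro j hj
      rw [eval_mul, eval_C, FP_eval', G, Finset.mul_sum]
    rw [Finset.sum_congr rfl this, Finset.sum_comm]
    refine Finset.sum_congr rfl fun k _ => ?_
    have hkey : eval ((k : ℚ) + 1) (FP n) = G n (k + 1) := by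
      have := FP_eval' n (k + 1)
      push_cast at this
      exact this
    rw [← hkey, FP]
    simp only [eval_finset_sum, eval_mul, eval_C, eval_pow, eval_X]
  · exact Set.infinite_range_of_injective Nat.cast_injective

end Aux1



/-- The Faulhaber polynomial
`Fₙ(a) = (1/(n+1)) Σ_{j=0}^{n} (-1)^j C(n+1,j) B_j a^{n+1-j}`
evaluated at an element `a` of an `F`-algebra. -/
noncomputable def faulhaber {F A : Type*} [Field F] [CharZero F] [Ring A] [Algebra F A]
    (n : ℕ) (a : A) : A :=
  (((n : F) + 1)⁻¹) •
    ∑ j ∈ Finset.range (n + 1),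
      ((-1 : F) ^ j * ((n + 1).choose j : F) * ((bernoulli j : ℚ) : F)) • a ^ (n + 1 - j)


section Aux2
open Finset Polynomial

lemma faulhaber_eq {F A : Type*} [Field F] [CharZero F] [Ring A] [Algebra F A] (n : ℕ) (a : A) :
    faulhaber (F := F) n a = ∑ j ∈ range (n + 1), ((fcoef n j : ℚ) : F) • a ^ (n + 1 - j) := by
  rw [faulhaber, Finset.smul_sum]
  refine Finset.sum_congr rfl fun j hj => ?_
  rw [smul_smul]
  congr 1
  rw [fcoef]
  push_cast
  ring

lemma ev_FP {F A : Type*} [Field F] [CharZero F] [Ring A] [Algebra F A] (n : ℕ) (a : A) :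
    aeval a ((FP n).map (algebraMap ℚ F)) = faulhaber (F := F) n a := by
  rw [faulhaber_eq, FP, Polynomial.map_sum, map_sum]
  refine Finset.sum_congr rfl fun j hj => ?_
  rw [Polynomial.map_mul, Polynomial.map_pow, map_C, map_X, map_mul, map_pow, aeval_X, aeval_C,
    eq_ratCast (algebraMap ℚ F), Algebra.smul_def]

end Aux2

section Main
open Finset Polynomial

lemma hpoly {F A : Type*} [Field F] [CharZero F] [Ring A] [Algebra F A] (m : ℕ) (a : A) :
    (a + 1) * faulhaber (F := F) m a
      = (1 + ((fcoef m 0 : ℚ) : F)) • faulhaber (F := F) (m + 1) a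
        + ∑ j ∈ range m, ((fcoef m (j + 1) : ℚ) : F) • faulhaber (F := F) (m - j) a := by
  have h := congrArg (fun p : ℚ[X] => aeval (R := F) a (p.map (algebraMap ℚ F))) (FP_key m)
  simp only [Polynomial.map_mul, Polynomial.map_add, Polynomial.map_one, Polynomial.map_X,
    Polynomial.map_sum, Polynomial.map_C, map_mul, map_add, map_sum, aeval_X, aeval_C,
    map_one, ev_FP, eq_ratCast (algebraMap ℚ F), ← Algebra.smul_def] at h
  rw [Finset.sum_range_succ'] at h
  simp only [Nat.add_sub_add_right, Nat.sub_zero] at h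
  rw [h, add_smul, one_smul]
  abel

theorem rb_faulhaber_aux {F A : Type*} [Field F] [CharZero F] [Ring A] [Algebra F A]
    (R : A →ₗ[F] A) (hR : IsRotaBaxter F (-1 : F) R) (n : ℕ) :
    R ((R 1) ^ n) = faulhaber (F := F) n (R 1) := by
  induction n using Nat.strong_induction_on with
  | _ n IH =>
    set a := R 1 with ha
    match n with
    | 0 =>
      simp only [pow_zero]
      rw [faulhaber_eq]
      simp [fcoef, ← ha]
    | m + 1 =>
      have c0 : F := ((fcoef m 0 : ℚ) : F)
      have hm : R (a ^ m) = faulhaber (F := F) m a := IH m (Nat.lt_succ_self m)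
      -- the Rota-Baxter relation with x = 1, y = a^m
      have hrb : a * R (a ^ m) = R (a ^ (m + 1)) + R (R (a ^ m)) - R (a ^ m) := by
        have h := hR 1 (a ^ m)
        simp only [one_mul, neg_smul, one_smul, ← ha] at h
        rw [h, ← pow_succ']
        rw [map_add, map_add, map_neg]
        abel
      -- expand R (R (a^m)) using the induction hypothesis
      have hsplit : R (R (a ^ m))
          = ((fcoef m 0 : ℚ) : F) • R (a ^ (m + 1))
            + ∑ j ∈ range m, ((fcoef m (j + 1) : ℚ) : F) • faulhaber (F := F) (m - j) a := by
        rw [hm, faulhaber_eq, map_sum]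
        simp only [map_smul]
        rw [Finset.sum_range_succ']
        simp only [Nat.add_sub_add_right, Nat.sub_zero]
        rw [add_comm]
        congr 1
        refine Finset.sum_congr rfl fun j hj => ?_
        rw [IH (m - j) (by omega)]
      have hkey : (1 + ((fcoef m 0 : ℚ) : F)) • R (a ^ (m + 1))
          = (1 + ((fcoef m 0 : ℚ) : F)) • faulhaber (F := F) (m + 1) a := by
        rw [hm] at hrb
        rw [hm] at hsplit
        calc (1 + ((fcoef m 0 : ℚ) : F)) • R (a ^ (m + 1))
            = R (a ^ (m + 1)) + ((fcoef m 0 : ℚ) : F) • R (a ^ (m + 1)) := by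
              rw [add_smul, one_smul]
          _ = (a + 1) * faulhaber (F := F) m a
              - ∑ j ∈ range m, ((fcoef m (j + 1) : ℚ) : F) • faulhaber (F := F) (m - j) a := by
              rw [add_mul, one_mul, hrb, hsplit]
              abel
          _ = (1 + ((fcoef m 0 : ℚ) : F)) • faulhaber (F := F) (m + 1) a := by
              rw [hpoly]; abel
      have hne : (1 + ((fcoef m 0 : ℚ) : F)) ≠ 0 := by
        have : ((1 : ℚ) + fcoef m 0) ≠ 0 := by
          have h0 : fcoef m 0 = ((m : ℚ) + 1)⁻¹ := by
            simp [fcoef, _root_.bernoulli_zero]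
          rw [h0]
          positivity
        intro hcon
        apply this
        have : (((1 : ℚ) + fcoef m 0 : ℚ) : F) = 0 := by push_cast; exact hcon
        exact_mod_cast this
      calc R (a ^ (m + 1))
          = (1 + ((fcoef m 0 : ℚ) : F))⁻¹ • ((1 + ((fcoef m 0 : ℚ) : F)) • R (a ^ (m + 1))) :=
            (inv_smul_smul₀ hne _).symm
        _ = (1 + ((fcoef m 0 : ℚ) : F))⁻¹ •
              ((1 + ((fcoef m 0 : ℚ) : F)) • faulhaber (F := F) (m + 1) a) := by rw [hkey]
        _ = faulhaber (F := F) (m + 1) a := inv_smul_smul₀ hne _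

end Main

/-- For an RB-operator `R` of weight `-1` on a unital associative algebra over a
field of characteristic zero with `a = R 1`, one has `R(aⁿ) = Fₙ(a)`. -/
theorem rb_faulhaber {F A : Type*} [Field F] [CharZero F] [Ring A] [Algebra F A]
    (R : A →ₗ[F] A) (hR : IsRotaBaxter F (-1 : F) R) (n : ℕ) :
    R ((R 1) ^ n) = faulhaber (F := F) n (R 1) := by
  exact rb_faulhaber_aux R hR n
end

section
/- Let A be a unital associative algebraic algebra over a field of characteristic zero and R a Rota–Baxter operator of weight 0 on A. Then R(1) is nilpotent. -/
open Polynomial Finset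

section aux
variable {F A : Type*} [Field F] [Ring A] [Algebra F A]
  (R : A →ₗ[F] A) (hR : IsRotaBaxter F (0 : F) R)

lemma rb_aux1 (hR : IsRotaBaxter F (0 : F) R) :
    ∀ m : ℕ, ((R ^ m) 1 : A) * R 1 = (m + 1) • (R ^ (m + 1)) 1 := by
  intro m
  induction m with
  | zero => simp
  | succ m ih =>
    have h1 : ((R ^ (m + 1)) 1 : A) = R ((R ^ m) 1) := by
      rw [pow_succ', Module.End.mul_apply]
    have h2 : ((R ^ (m + 2)) 1 : A) = R ((R ^ (m + 1)) 1) := by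
      rw [pow_succ', Module.End.mul_apply]
    calc ((R ^ (m + 1)) 1 : A) * R 1
        = R ((R ^ m) 1) * R 1 := by rw [h1]
      _ = R (R ((R ^ m) 1) * 1 + (R ^ m) 1 * R 1 + (0 : F) • ((R ^ m) 1 * 1)) := hR _ _
      _ = R ((R ^ (m + 1)) 1 + (m + 1) • (R ^ (m + 1)) 1) := by
          rw [zero_smul, mul_one, ih, add_zero, h1]
      _ = (m + 2) • (R ^ (m + 2)) 1 := by
          have h3 : ((R ^ (m+1)) 1 : A) + (m + 1) • (R ^ (m+1)) 1
              = (m + 2) • (R ^ (m+1)) 1 := by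
            rw [succ_nsmul ((R ^ (m+1)) (1:A)) (m+1)]; exact add_comm _ _
          rw [h3, map_nsmul, ← h2]
  
lemma rb_aux2 (hR : IsRotaBaxter F (0 : F) R) :
    ∀ m : ℕ, (R 1 : A) ^ m = m.factorial • (R ^ m) 1 := by
  intro m
  induction m with
  | zero => simp
  | succ m ih =>
    rw [pow_succ, ih, smul_mul_assoc, rb_aux1 R hR m, smul_smul,
      Nat.factorial_succ, mul_comm]

end aux

/-- For a weight-zero RB-operator `R` on a unital associative algebraic algebra
over a field of characteristic zero, `R 1` is nilpotent. -/
theorem rb_weight_zero_R1_nilpotent {F A : Type*} [Field F] [CharZero F]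
    [Ring A] [Algebra F A]
    (halg : ∀ x : A, IsAlgebraic F x)
    (R : A →ₗ[F] A) (hR : IsRotaBaxter F (0 : F) R) :
    IsNilpotent (R 1) := by
  rcases subsingleton_or_nontrivial A with hA | hA
  · exact ⟨1, Subsingleton.elim _ _⟩
  set x : A := R 1 with hxdef
  have hx : IsIntegral F x := (halg x).isIntegral
  set p : Polynomial F := minpoly F x with hpdef
  set n : ℕ := p.natDegree with hndef
  have hn : 0 < n := minpoly.natDegree_pos hx
  set a : ℕ → F := fun i => p.coeff i with hadef
  have han : a n = 1 := (minpoly.monic hx).coeff_natDegree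
  -- the "antiderivative" q of p with zero constant term
  set q : Polynomial F := ∑ i ∈ range (n + 1), C (a i / (i + 1 : F)) * X ^ (i + 1)
    with hqdef
  -- x ^ m = m! • (R^m) 1
  have hpow : ∀ m : ℕ, x ^ m = m.factorial • (R ^ m) 1 := rb_aux2 R hR
  -- aeval x q = 0
  have haq : aeval x q = 0 := by
    have : aeval x q = R (aeval x p) := by
      rw [hqdef, map_sum, aeval_eq_sum_range, map_sum]
      refine Finset.sum_congr rfl fun i hi => ?_
      have hcast : ∀ (m : ℕ) (y : A), m.factorial • y = (m.factorial : F) • y := by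
        intro m y; rw [← Nat.cast_smul_eq_nsmul F]
      rw [map_mul, aeval_C, aeval_X_pow, hpow (i + 1), hpow i]
      have h1 : ((R ^ (i + 1)) 1 : A) = R ((R ^ i) 1) := by
        rw [pow_succ', Module.End.mul_apply]
      rw [h1, ← Algebra.smul_def, hcast, hcast, smul_smul, smul_smul, map_smul]
      congr 1
      have hne : ((i : F) + 1) ≠ 0 := by
        exact_mod_cast (Nat.cast_add_one_ne_zero i : ((i : F) + 1) ≠ 0)
      field_simp
      push_cast [Nat.factorial_succ]
      ring
    rw [this, minpoly.aeval, map_zero]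
  have hdvd : p ∣ q := minpoly.dvd F x haq
  have hne1 : ((n : F) + 1) ≠ 0 := Nat.cast_add_one_ne_zero n
  -- coefficients of q
  have hq0 : q.coeff 0 = 0 := by
    rw [hqdef, finset_sum_coeff]
    refine Finset.sum_eq_zero fun i hi => ?_
    simp [coeff_C_mul, coeff_X_pow]
  have hqtop : q.coeff (n + 1) = 1 / ((n : F) + 1) := by
    rw [hqdef, finset_sum_coeff, Finset.sum_eq_single n]
    · rw [coeff_C_mul, coeff_X_pow, if_pos rfl, han, mul_one, one_div]
    · intro i hi hine
      rw [coeff_C_mul, coeff_X_pow, if_neg (by omega), mul_zero]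
    · intro h; exact absurd (Finset.self_mem_range_succ n) h
  have hqtopne : q.coeff (n + 1) ≠ 0 := by
    rw [hqtop]; exact one_div_ne_zero hne1
  have hqne : q ≠ 0 := fun h => hqtopne (by simp [h])
  have hqdeg : q.natDegree = n + 1 := by
    refine le_antisymm ?_ (le_natDegree_of_ne_zero hqtopne)
    rw [hqdef]
    refine natDegree_sum_le_of_forall_le _ _ fun i hi => ?_
    refine (natDegree_C_mul_X_pow_le _ _).trans ?_
    have := Finset.mem_range.mp hi; omega
  -- derivative of q is p
  have hterm : ∀ i : ℕ,
      derivative (C (a i / ((i : F) + 1)) * X ^ (i + 1)) = C (a i) * X ^ i := by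
    intro i
    rw [derivative_C_mul_X_pow, Nat.add_sub_cancel]
    have hcc : a i / ((i : F) + 1) * (((i : ℕ) + 1 : ℕ) : F) = a i := by
      push_cast
      exact div_mul_cancel₀ (a i) (Nat.cast_add_one_ne_zero i)
    rw [hcc]
  have hderiv : derivative q = p := by
    rw [hqdef, derivative_sum]
    rw [Finset.sum_congr rfl fun i _ => hterm i]
    conv_rhs => rw [p.as_sum_range' (n + 1) (by omega)]
    simp [C_mul_X_pow_eq_monomial]
    rfl
  -- the linear cofactor
  obtain ⟨l, hl⟩ := hdvd
  have hpne : p ≠ 0 := minpoly.ne_zero hx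
  have hpm : p.Monic := minpoly.monic hx
  have hlne : l ≠ 0 := by rintro rfl; rw [mul_zero] at hl; exact hqne hl
  have hldeg : l.natDegree = 1 := by
    have h := natDegree_mul hpne hlne
    rw [← hl, hqdeg, ← hndef] at h
    omega
  set b : F := l.coeff 1 with hbdef
  set c0 : F := l.coeff 0 with hc0def
  have hlform : l = C b * X + C c0 :=
    l.eq_X_add_C_of_natDegree_le_one (by omega)
  have hb : b = 1 / ((n : F) + 1) := by
    have h1 : q.leadingCoeff = p.leadingCoeff * l.leadingCoeff := by
      rw [hl, leadingCoeff_mul]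
    rw [hpm.leadingCoeff, one_mul, leadingCoeff, leadingCoeff, hqdeg, hldeg, hqtop] at h1
    rw [← hbdef] at h1
    exact h1.symm
  have hbne : b ≠ 0 := by rw [hb]; exact one_div_ne_zero hne1
  have hc : a 0 * c0 = 0 := by
    have h := mul_coeff_zero p l
    rw [← hl, hq0] at h
    exact h.symm
  -- the differential equation p * (1 - C b) = p' * l
  have hde : p * (1 - C b) = derivative p * l := by
    have h := hderiv
    rw [hl, derivative_mul] at h
    have hdl : derivative l = C b := by rw [hlform]; simp
    rw [hdl] at h
    linear_combination -h
  -- coefficient recursion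
  have hrec : ∀ i : ℕ, a i * (1 - b) = b * (i : F) * a i + c0 * ((i : F) + 1) * a (i + 1) := by
    intro i
    have h := congrArg (fun f : Polynomial F => f.coeff i) hde
    have hlhs : (p * (1 - C b)).coeff i = a i * (1 - b) := by
      rw [mul_sub, mul_one, coeff_sub, coeff_mul_C, mul_sub, mul_one]
    have hX : (derivative p * X).coeff i = (i : F) * a i := by
      cases i with
      | zero => simp
      | succ j =>
        rw [coeff_mul_X, coeff_derivative]
        push_cast
        ring
    have hrhs : (derivative p * l).coeff i
        = b * (i : F) * a i + c0 * ((i : F) + 1) * a (i + 1) := by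
      rw [hlform, mul_add, coeff_add]
      have h1 : (derivative p * (C b * X)).coeff i = b * (i : F) * a i := by
        have : derivative p * (C b * X) = C b * (derivative p * X) := by ring
        rw [this, coeff_C_mul, hX]
        ring
      have h2 : (derivative p * C c0).coeff i = c0 * ((i : F) + 1) * a (i + 1) := by
        rw [coeff_mul_C, coeff_derivative]
        ring
      rw [h1, h2]
    rw [hlhs, hrhs] at h
    exact h
  -- case analysis on the constant term of l
  by_cases hc0z : c0 = 0
  · -- l has zero constant term: all lower coefficients of p vanish
    have hvan : ∀ i, i < n → a i = 0 := by
      intro i hi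
      have h := hrec i
      rw [hc0z, zero_mul, zero_mul, add_zero] at h
      have hfac : a i * (1 - b - b * (i : F)) = 0 := by linear_combination h
      have hnz : (1 - b - b * (i : F)) ≠ 0 := by
        have heq : 1 - b - b * (i : F) = ((n : F) - i) / ((n : F) + 1) := by
          rw [hb]; field_simp; try ring
        rw [heq]
        refine div_ne_zero (sub_ne_zero.mpr ?_) hne1
        exact_mod_cast hi.ne'
      exact (mul_eq_zero.mp hfac).resolve_right hnz
    have haev := minpoly.aeval F x
    rw [aeval_eq_sum_range, ← hndef, Finset.sum_range_succ] at haev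
    rw [Finset.sum_eq_zero (fun i hi => by
      have h0 : (minpoly F x).coeff i = (0 : F) := hvan i (Finset.mem_range.mp hi)
      rw [h0, zero_smul]), zero_add] at haev
    have h1 : (minpoly F x).coeff n = (1 : F) := han
    rw [h1, one_smul] at haev
    exact ⟨n, haev⟩
  · -- l has nonzero constant term: contradiction
    have ha0 : a 0 = 0 := by
      rcases mul_eq_zero.mp hc with h | h
      · exact h
      · exact absurd h hc0z
    have hall : ∀ i, a i = 0 := by
      intro i
      induction i with
      | zero => exact ha0
      | succ j ih =>
        have h := hrec j
        rw [ih] at h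
        simp only [mul_zero, zero_mul, zero_add] at h
        have h3 := h.symm
        rw [mul_assoc, mul_eq_zero, mul_eq_zero] at h3
        rcases h3 with h' | h' | h'
        · exact absurd h' hc0z
        · exact absurd h' (Nat.cast_add_one_ne_zero j)
        · exact h'
    exact absurd (hall n ▸ han : (0 : F) = 1) (by norm_num)
end

section
/- Let A be a commutative associative algebra over a field of characteristic zero, e a nonzero idempotent of A, and R a Rota–Baxter operator of weight 0 on A. Then e is not in the image of R. -/
/-- In a commutative associative algebra over a field of characteristic zero, a
nonzero idempotent is not in the image of a weight-zero RB-operator. -/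
theorem rb_weight_zero_idempotent_not_in_image {F A : Type*} [Field F] [CharZero F]
    [NonUnitalCommRing A] [Module F A] [SMulCommClass F A A] [IsScalarTower F A A]
    (e : A) (he : e * e = e) (hne : e ≠ 0)
    (R : A →ₗ[F] A) (hR : IsRotaBaxter F (0 : F) R) :
    e ∉ LinearMap.range R := by
  rintro ⟨a, ha⟩
  set u := R (e * a) with hu
  have h1 : e = u + u := by
    have h := hR a a
    rw [ha, zero_smul, add_zero, he, mul_comm a e, map_add] at h
    exact h
  have h2 : e * u = u + R (a * u) := by
    have h := hR a (e * a)
    rw [ha, zero_smul, add_zero, ← mul_assoc, he, map_add] at h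
    exact h
  have h3 : e = e + u := by
    calc e = e * e := he.symm
    _ = e * u + e * u := by rw [h1, mul_add]
    _ = (u + u) + R (a * u + a * u) := by rw [h2, map_add]; abel
    _ = e + R (a * (u + u)) := by rw [mul_add, ← h1]
    _ = e + R (a * e) := by rw [← h1]
    _ = e + u := by rw [mul_comm a e]
  have hu0 : u = 0 := by
    have := h3.symm
    rwa [add_eq_left] at this
  exact hne (by rw [h1, hu0, add_zero])
end

section
/- Let A be an algebra, e an idempotent of A, and R a Rota–Baxter operator of weight 0 on A. Then e does not lie in Im(R²) ∩ ker(R). -/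
/-- For a weight-zero RB-operator `R` on an algebra, a (nonzero) idempotent `e`
does not lie in `Im(R²) ∩ ker R`. -/
theorem rb_idempotent_not_in_imR2_cap_ker {F A : Type*} [Field F]
    [NonUnitalNonAssocRing A] [Module F A] [SMulCommClass F A A] [IsScalarTower F A A]
    (e : A) (he : e * e = e) (hne : e ≠ 0)
    (R : A →ₗ[F] A) (hR : IsRotaBaxter F (0 : F) R) :
    e ∉ (LinearMap.range (R ∘ₗ R) ⊓ LinearMap.ker R : Submodule F A) := by
  rintro ⟨⟨x, hx⟩, hker⟩
  simp only [LinearMap.comp_apply] at hx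
  have hker' : R e = 0 := hker
  -- e * e = R (e * R x + R x * e)
  have h1 := hR (R x) (R x)
  rw [hx, zero_smul, add_zero, he] at h1
  -- R (e * R x) = 0
  have h2 := hR e x
  rw [hker', zero_mul, zero_mul, zero_smul, add_zero, zero_add] at h2
  -- R (R x * e) = 0
  have h3 := hR x e
  rw [hker', mul_zero, mul_zero, zero_smul, add_zero, add_zero] at h3
  rw [map_add, ← h2, ← h3] at h1
  simp only [mul_zero, zero_mul, zero_add, add_zero] at h1
  exact hne h1
end

section
/- Let A be an algebra with an invertible derivation d of weight λ, i.e., d(xy) = d(x)y + xd(y) + λd(x)d(y) for all x, y. Then d⁻¹ is a Rota–Baxter operator of weight λ on A. -/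
/-- If `d` is an invertible derivation of weight `lam` on an algebra `A`, then
`d⁻¹` is a Rota–Baxter operator of weight `lam` on `A`. -/
theorem rb_inverse_of_weighted_derivation {F A : Type*} [Field F]
    [NonUnitalNonAssocRing A] [Module F A] [SMulCommClass F A A] [IsScalarTower F A A]
    (lam : F) (d : A ≃ₗ[F] A)
    (hd : ∀ x y : A, d (x * y) = d x * y + x * d y + lam • (d x * d y)) :
    IsRotaBaxter F lam d.symm.toLinearMap := by
  intro x y
  have key : d (d.symm x * d.symm y)
      = d.symm x * y + x * d.symm y + lam • (x * y) := by
    rw [hd, d.apply_symm_apply, d.apply_symm_apply]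
    abel
  calc d.symm x * d.symm y = d.symm (d (d.symm x * d.symm y)) := (d.symm_apply_apply _).symm
    _ = d.symm (d.symm x * y + x * d.symm y + lam • (x * y)) := by rw [key]
end
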